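/- For every integer t ≥ 1 with t ≢ 0 (mod 3), the class number of the imaginary quadratic field ℚ(√(−t(3888t² + 108t + 1))) is divisible by 3. -/

import Mathlib

/-- Descent: if `3 ∤ d` and `3 ∤ c` then `d x² = 3 c y²` forces `x = 0`. -/
lemma aux_descent (d c : ℤ) (hd : ¬ (3:ℤ) ∣ d) (hc : ¬ (3:ℤ) ∣ c) :
    ∀ x y : ℤ, d * x ^ 2 = 3 * c * y ^ 2 → x = 0 := by
  have h3 : Prime (3 : ℤ) := Int.prime_three
  suffices H : ∀ n : ℕ, ∀ x y : ℤ, x.natAbs = n → d * x ^ 2 = 3 * c * y ^ 2 → x = 0 by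
    intro x y h; exact H x.natAbs x y rfl h
  intro n
  induction n using Nat.strong_induction_on with
  | _ n ih =>
    intro x y hxn heq
    by_contra hx0
    have h3x : (3:ℤ) ∣ x := by
      have : (3:ℤ) ∣ d * x ^ 2 := ⟨c * y ^ 2, by linarith⟩
      rcases h3.dvd_mul.mp this with h | h
      · exact absurd h hd
      · exact h3.dvd_of_dvd_pow h
    obtain ⟨x1, rfl⟩ := h3x
    have heq1 : 3 * d * x1 ^ 2 = c * y ^ 2 := by nlinarith [heq]
    have h3y : (3:ℤ) ∣ y := by
      have : (3:ℤ) ∣ c * y ^ 2 := ⟨d * x1 ^ 2, by linarith⟩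
      rcases h3.dvd_mul.mp this with h | h
      · exact absurd h hc
      · exact h3.dvd_of_dvd_pow h
    obtain ⟨y1, rfl⟩ := h3y
    have heq2 : d * x1 ^ 2 = 3 * c * y1 ^ 2 := by nlinarith [heq1]
    have hx1 : x1 ≠ 0 := by rintro rfl; exact hx0 (by ring)
    have hlt : x1.natAbs < n := by
      subst hxn
      have h1 : (3 * x1).natAbs = 3 * x1.natAbs := by
        rw [Int.natAbs_mul]; rfl
      have h2 : x1.natAbs ≠ 0 := Int.natAbs_ne_zero.mpr hx1
      omega
    have := ih x1.natAbs hlt x1 y1 rfl heq2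
    exact hx1 this

/-- No rational solution to `d ρ² = 3 c` when `3 ∤ d`, `3 ∤ c`. -/
lemma aux_rat (d c : ℤ) (hd : ¬ (3:ℤ) ∣ d) (hc : ¬ (3:ℤ) ∣ c) (ρ : ℚ) :
    (d : ℚ) * ρ ^ 2 ≠ 3 * (c : ℚ) := by
  intro h
  have hden : (ρ.den : ℚ) ≠ 0 := by exact_mod_cast ρ.den_nz
  have hρ : (ρ.num : ℚ) = ρ * ρ.den := by
    rw [eq_comm, ← eq_div_iff hden, Rat.num_div_den]
  have key : (d : ℚ) * (ρ.num : ℚ) ^ 2 = 3 * (c:ℚ) * (ρ.den : ℚ) ^ 2 := by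
    rw [hρ]; nlinarith [h]
  have keyZ : d * ρ.num ^ 2 = 3 * c * (ρ.den : ℤ) ^ 2 := by exact_mod_cast key
  have h0 := aux_descent d c hd hc ρ.num (ρ.den : ℤ) keyZ
  rw [h0] at keyZ
  have hden2 : (0:ℤ) < (ρ.den : ℤ) ^ 2 := by positivity
  have hc0 : c = 0 := by nlinarith [keyZ]
  exact hc (hc0 ▸ dvd_zero 3)

set_option maxHeartbeats 2000000 in
open NumberField Polynomial in
open scoped nonZeroDivisors in
/-- For every integer `t ≥ 1` with `t ≢ 0 (mod 3)`, the class number of the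
imaginary quadratic field `ℚ(√(−t(3888t² + 108t + 1)))` is divisible by `3`.
The quadratic field is encoded as any number field `K` generated over `ℚ` by a
square root `z` of `−t(3888t² + 108t + 1)`. -/
theorem stmt_14 (t : ℤ) (ht : 1 ≤ t) (ht3 : ¬ (3 : ℤ) ∣ t) :
    ∀ (K : Type) [Field K] [NumberField K] (z : K),
      z ^ 2 = ((-(t * (3888 * t ^ 2 + 108 * t + 1)) : ℤ) : K) →
      IntermediateField.adjoin ℚ {z} = ⊤ →
      3 ∣ NumberField.classNumber K := by
  intro K _ _ z hz hadj
  set d : ℤ := t * (3888 * t ^ 2 + 108 * t + 1) with hd_def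
  have hd1 : 1 ≤ d := by nlinarith
  have hd3 : ¬ (3:ℤ) ∣ d := by
    rintro h
    rcases Int.prime_three.dvd_mul.mp h with h' | h'
    · exact ht3 h'
    · obtain ⟨k, hk⟩ := h'
      have : (3:ℤ) ∣ 1 := ⟨k - 1296 * t ^ 2 - 36 * t, by linarith⟩
      norm_num at this
  have hz0 : z ^ 2 + ((d : ℤ) : K) = 0 := by
    rw [hz]; push_cast; ring
  have hdk : ((d : ℤ) : K) = (t:K) * (3888 * (t:K) ^ 2 + 108 * (t:K) + 1) := by
    rw [hd_def]; push_cast; ring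
  -- z is not rational
  have hzirr : ∀ r : ℚ, z ≠ (r : K) := by
    intro r hr
    have h1 : ((r ^ 2 + d : ℚ) : K) = 0 := by push_cast; rw [← hr]; exact hz0
    have h2 : (r ^ 2 + d : ℚ) = 0 := by exact_mod_cast h1
    have h3 : (0:ℚ) < r ^ 2 + d := by
      have : (1:ℚ) ≤ (d:ℚ) := by exact_mod_cast hd1
      nlinarith
    linarith
  -- uniqueness of coordinates
  have hbasis : ∀ a b : ℚ, (a : K) + (b : K) * z = 0 → a = 0 ∧ b = 0 := by
    intro a b h
    by_cases hb : b = 0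
    · subst hb
      simp only [Rat.cast_zero, zero_mul, add_zero] at h
      exact ⟨by exact_mod_cast h, rfl⟩
    · exfalso
      apply hzirr (-a / b)
      have hbK : (b : K) ≠ 0 := by exact_mod_cast hb
      push_cast
      field_simp
      linear_combination h
  -- existence of coordinates
  have hspan : ∀ x : K, ∃ a b : ℚ, x = (a : K) + (b : K) * z := by
    intro x
    set S : Subalgebra ℚ K :=
      { carrier := {x : K | ∃ a b : ℚ, x = (a:K) + (b:K) * z}
        zero_mem' := ⟨0, 0, by push_cast; ring⟩
        one_mem' := ⟨1, 0, by push_cast; ring⟩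
        add_mem' := by
          rintro x y ⟨a, b, rfl⟩ ⟨c, e, rfl⟩
          exact ⟨a + c, b + e, by push_cast; ring⟩
        mul_mem' := by
          rintro x y ⟨a, b, rfl⟩ ⟨c, e, rfl⟩
          refine ⟨a * c - (d:ℚ) * b * e, a * e + b * c, ?_⟩
          push_cast
          linear_combination (b:K) * (e:K) * hz0
        algebraMap_mem' := fun r => ⟨r, 0, by rw [eq_ratCast]; push_cast; ring⟩ } with hS
    have hinv : ∀ y ∈ S, y⁻¹ ∈ S := by
      rintro y ⟨a, b, rfl⟩
      by_cases h0 : a = 0 ∧ b = 0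
      · obtain ⟨rfl, rfl⟩ := h0
        refine ⟨0, 0, ?_⟩
        push_cast
        simp
      · set n : ℚ := a ^ 2 + (d:ℚ) * b ^ 2 with hn
        have hdq : (1:ℚ) ≤ (d:ℚ) := by exact_mod_cast hd1
        have hnne : n ≠ 0 := by
          intro hn0
          rcases (not_and_or.mp h0) with h | h <;>
          · apply h
            nlinarith [sq_nonneg a, sq_nonneg b]
        refine ⟨a / n, -b / n, ?_⟩
        have hnK : (n : K) ≠ 0 := by exact_mod_cast hnne
        have hnKval : (n : K) = (a:K) ^ 2 + ((d:ℤ):K) * (b:K) ^ 2 := by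
          rw [hn]; push_cast; ring
        apply inv_eq_of_mul_eq_one_right
        push_cast
        field_simp
        linear_combination -(b:K) ^ 2 * hz0 - hnKval
    have hzS : z ∈ S := ⟨0, 1, by push_cast; ring⟩
    have hle : IntermediateField.adjoin ℚ {z} ≤ S.toIntermediateField hinv :=
      IntermediateField.adjoin_le_iff.mpr (Set.singleton_subset_iff.mpr hzS)
    rw [hadj] at hle
    exact hle (IntermediateField.mem_top)
  -- z is integral
  have hzint : IsIntegral ℤ z := by
    refine ⟨X ^ 2 + C (d:ℤ), Polynomial.monic_X_pow_add_C _ (by norm_num), ?_⟩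
    simp only [eval₂_add, eval₂_X_pow, eval₂_C]
    rw [show (algebraMap ℤ K) d = ((d:ℤ):K) from by simp [algebraMap_int_eq, eq_intCast]]
    exact hz0
  -- coordinates of integral elements
  have hint : ∀ (x : 𝓞 K) (a b : ℚ), (x : K) = (a:K) + (b:K) * z →
      ∃ X N : ℤ, (X : ℚ) = 2 * a ∧ (N : ℚ) = a ^ 2 + (d:ℚ) * b ^ 2 := by
    intro x a b hxab
    have hxint : IsIntegral ℤ (x:K) := x.isIntegral_coe
    by_cases hb : b = 0
    · subst hb
      have hxa : (x:K) = (a:K) := by rw [hxab]; push_cast; ring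
      have haint : IsIntegral ℤ a := by
        have h1 : algebraMap ℚ K a = (x:K) := by rw [eq_ratCast]; exact hxa.symm
        exact (isIntegral_algebraMap_iff ((algebraMap ℚ K).injective)).mp (h1 ▸ hxint)
      obtain ⟨n, hn⟩ := IsIntegrallyClosed.isIntegral_iff.mp haint
      rw [algebraMap_int_eq, eq_intCast] at hn
      exact ⟨2 * n, n ^ 2, by push_cast [hn]; ring, by push_cast [hn]; ring⟩
    · set P : ℚ[X] := X ^ 2 - C (2 * a) * X + C (a ^ 2 + (d:ℚ) * b ^ 2) with hP
      have hPmonic : P.Monic := by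
        rw [hP]; monicity!
      have hProot : Polynomial.aeval (x:K) P = 0 := by
        simp only [hP, map_add, map_sub, map_mul, map_pow, aeval_X, aeval_C, eq_ratCast]
        rw [hxab]
        push_cast
        linear_combination (b:K) ^ 2 * hz0
      have hxintQ : IsIntegral ℚ (x:K) := IsIntegral.of_finite ℚ _
      have hdvd : minpoly ℚ (x:K) ∣ P := minpoly.dvd ℚ _ hProot
      have hPdeg : P.natDegree = 2 := by
        rw [hP]; compute_degree!
      have hnotmem : (x:K) ∉ (algebraMap ℚ K).range := by
        rintro ⟨r, hr⟩
        rw [eq_ratCast] at hr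
        have hreq : (r:K) = (a:K) + (b:K) * z := by rw [hr, hxab]
        apply hzirr ((r - a) / b)
        have hbK : (b : K) ≠ 0 := by exact_mod_cast hb
        push_cast
        field_simp
        linear_combination -hreq
      have h2le : 2 ≤ (minpoly ℚ (x:K)).natDegree :=
        (minpoly.two_le_natDegree_iff hxintQ).mpr hnotmem
      have hmle : (minpoly ℚ (x:K)).natDegree ≤ 2 :=
        hPdeg ▸ Polynomial.natDegree_le_of_dvd hdvd hPmonic.ne_zero
      have hPeq : minpoly ℚ (x:K) = P := by
        refine Polynomial.eq_of_dvd_of_natDegree_le_of_leadingCoeff hdvd ?_ ?_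
        · omega
        · rw [(minpoly.monic hxintQ).leadingCoeff, hPmonic.leadingCoeff]
      have hmap : minpoly ℚ (x:K) = (minpoly ℤ (x:K)).map (algebraMap ℤ ℚ) :=
        minpoly.isIntegrallyClosed_eq_field_fractions' ℚ hxint
      refine ⟨-((minpoly ℤ (x:K)).coeff 1), (minpoly ℤ (x:K)).coeff 0, ?_, ?_⟩
      · have h := congrArg (fun Q : ℚ[X] => Q.coeff 1) (hmap.symm.trans hPeq)
        simp only [hP, Polynomial.coeff_map, algebraMap_int_eq, eq_intCast, coeff_add,
          coeff_sub, coeff_C_mul, coeff_X, coeff_C, coeff_X_pow] at h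
        norm_num at h
        push_cast
        linear_combination -h
      · have h := congrArg (fun Q : ℚ[X] => Q.coeff 0) (hmap.symm.trans hPeq)
        simp only [hP, Polynomial.coeff_map, algebraMap_int_eq, eq_intCast, coeff_add,
          coeff_sub, coeff_C_mul, coeff_X, coeff_C, coeff_X_pow] at h
        norm_num at h
        linear_combination h
  -- the algebraic elements
  set ζ : 𝓞 K := ⟨z, hzint⟩ with hζ
  set A : 𝓞 K := 1 + 18 * ζ with hA_def
  set B : 𝓞 K := 1 - 18 * ζ with hB_def
  have hζK : (ζ : K) = z := rfl
  have hAK : (A : K) = 1 + 18 * z := by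
    rw [hA_def]; push_cast [hζK, map_ofNat]; ring
  have hBK : (B : K) = 1 - 18 * z := by
    rw [hB_def]; push_cast [hζK, map_ofNat]; ring
  have hABM : A * B = ((108 * t + 1 : ℤ) : 𝓞 K) ^ 3 := by
    apply NumberField.RingOfIntegers.eq_iff.mp
    push_cast [hAK, hBK, map_ofNat, map_intCast]
    linear_combination (-324 : K) * hz0 + (324 : K) * hdk
  have hcop : IsCoprime A B := by
    refine ⟨B - 162 * ((d : ℤ) : 𝓞 K), -(162 * ((d : ℤ) : 𝓞 K)), ?_⟩
    apply NumberField.RingOfIntegers.eq_iff.mp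
    push_cast [hAK, hBK, map_ofNat, map_intCast]
    linear_combination (-324 : K) * hz0
  have hAne : A ≠ 0 := by
    intro h
    have h1 : (A : K) = 0 := by rw [h]; exact map_zero _
    rw [hAK] at h1
    have h2 := (hbasis 1 18 (by push_cast; linear_combination h1)).1
    norm_num at h2
  -- ideal theory
  have hIJ : Ideal.span {A} * Ideal.span {B} =
      Ideal.span {((108 * t + 1 : ℤ) : 𝓞 K)} ^ 3 := by
    rw [Ideal.span_singleton_mul_span_singleton, hABM, Ideal.span_singleton_pow]
  have hgcd : IsUnit (gcd (Ideal.span {A}) (Ideal.span {B})) := by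
    rw [Ideal.isUnit_iff]
    apply eq_top_iff.mpr
    have h1 : Ideal.span {A} ≤ gcd (Ideal.span {A}) (Ideal.span {B}) :=
      Ideal.le_of_dvd (gcd_dvd_left _ _)
    have h2 : Ideal.span {B} ≤ gcd (Ideal.span {A}) (Ideal.span {B}) :=
      Ideal.le_of_dvd (gcd_dvd_right _ _)
    have h3 : Ideal.span {A} ⊔ Ideal.span {B} = ⊤ :=
      Ideal.isCoprime_iff_sup_eq.mp ((Ideal.isCoprime_span_singleton_iff _ _).mpr hcop)
    rw [← h3]; exact sup_le h1 h2
  obtain ⟨Cid, hCid⟩ : ∃ I : Ideal (𝓞 K), Ideal.span {A} = I ^ 3 :=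
    exists_eq_pow_of_mul_eq_pow hgcd hIJ
  by_contra h3
  -- class group argument
  have hCid0 : Cid ∈ (Ideal (𝓞 K))⁰ := by
    rw [mem_nonZeroDivisors_iff_ne_zero]
    intro h
    rw [h, zero_pow (by norm_num : (3:ℕ) ≠ 0)] at hCid
    rw [Ideal.zero_eq_bot, Ideal.span_singleton_eq_bot] at hCid
    exact hAne hCid
  set g := ClassGroup.mk0 (⟨Cid, hCid0⟩ : (Ideal (𝓞 K))⁰) with hg
  have hg3 : g ^ 3 = 1 := by
    have hmem : Ideal.span {A} ∈ (Ideal (𝓞 K))⁰ := by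
      rw [mem_nonZeroDivisors_iff_ne_zero, ne_eq, Ideal.zero_eq_bot,
        Ideal.span_singleton_eq_bot]
      exact hAne
    have hpoweq : (⟨Cid, hCid0⟩ : (Ideal (𝓞 K))⁰) ^ 3 = ⟨Ideal.span {A}, hmem⟩ := by
      apply Subtype.ext
      rw [SubmonoidClass.coe_pow]
      exact hCid.symm
    rw [hg, ← map_pow, hpoweq]
    exact (ClassGroup.mk0_eq_one_iff hmem).mpr ⟨⟨A, rfl⟩⟩
  have hgone : g = 1 := by
    have h1 : orderOf g ∣ 3 := orderOf_dvd_of_pow_eq_one hg3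
    have h2 : orderOf g ∣ Fintype.card (ClassGroup (𝓞 K)) := orderOf_dvd_card
    rcases (Nat.Prime.eq_one_or_self_of_dvd (by norm_num) _ h1) with h | h
    · exact orderOf_eq_one_iff.mp h
    · exact absurd (h ▸ h2) h3
  have hCprin : Cid.IsPrincipal := (ClassGroup.mk0_eq_one_iff hCid0).mp hgone
  obtain ⟨γ, hγ⟩ := hCprin.principal
  have hAγ : Ideal.span {A} = Ideal.span {γ ^ 3} := by
    rw [hCid, hγ, Ideal.submodule_span_eq, Ideal.span_singleton_pow]
  obtain ⟨u, hu⟩ : ∃ u : (𝓞 K)ˣ, γ ^ 3 * u = A :=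
    Ideal.span_singleton_eq_span_singleton.mp hAγ.symm
  -- unit analysis : u ^ 9 = u
  have hu9 : u ^ 9 = u := by
    obtain ⟨p, q, hU⟩ := hspan ((u : 𝓞 K) : K)
    obtain ⟨p', q', hV⟩ := hspan (((u⁻¹ : (𝓞 K)ˣ) : 𝓞 K) : K)
    have hUV : ((p:K) + (q:K) * z) * ((p':K) + (q':K) * z) = 1 := by
      rw [← hU, ← hV, ← map_mul, u.mul_inv, map_one]
    obtain ⟨e1, e2⟩ := hbasis (p * p' - (d:ℚ) * q * q' - 1) (p * q' + q * p')
      (by push_cast; linear_combination hUV - (q:K) * (q':K) * hz0)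
    obtain ⟨X1, N1, hX1, hN1⟩ := hint u p q hU
    obtain ⟨X2, N2, hX2, hN2⟩ := hint ↑u⁻¹ p' q' hV
    have hNN : N1 * N2 = 1 := by
      have h : ((N1 * N2 : ℤ) : ℚ) = 1 := by
        push_cast
        rw [hN1, hN2]
        linear_combination (p * p' - (d:ℚ) * q * q' + 1) * e1 +
          (d:ℚ) * (p * q' + q * p') * e2
      exact_mod_cast h
    have hdq : (1:ℚ) ≤ (d:ℚ) := by exact_mod_cast hd1
    have hN1pos : 0 ≤ N1 := by
      have : (0:ℚ) ≤ (N1:ℚ) := by rw [hN1]; nlinarith [sq_nonneg p, sq_nonneg q]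
      exact_mod_cast this
    have hN1one : N1 = 1 := by
      rcases Int.mul_eq_one_iff_eq_one_or_neg_one.mp hNN with ⟨h, _⟩ | ⟨h, _⟩ <;> omega
    have hpq : p ^ 2 + (d:ℚ) * q ^ 2 = 1 := by
      rw [← hN1, hN1one]; norm_num
    by_cases hq : q = 0
    · -- u = ±1, so u² = 1
      have hp2 : p ^ 2 = 1 := by rw [hq] at hpq; simpa using hpq
      have husq : (u : 𝓞 K) ^ 2 = 1 := by
        apply NumberField.RingOfIntegers.eq_iff.mp
        push_cast [hU, hq]
        have hp2K : (p:K) ^ 2 = 1 := by exact_mod_cast hp2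
        linear_combination hp2K
      have hu2 : u ^ 2 = 1 := by
        apply Units.ext
        rw [Units.val_pow_eq_pow_val, husq, Units.val_one]
      rw [show (9:ℕ) = 2 * 4 + 1 from rfl, pow_succ, pow_mul, hu2, one_pow, one_mul]
    · -- q ≠ 0
      have hXq : (X1:ℚ) ^ 2 + 4 * (d:ℚ) * q ^ 2 = 4 := by
        rw [hX1]; linear_combination 4 * hpq
      set Dq : ℤ := 4 - X1 ^ 2 with hDq_def
      have hDqQ : (Dq:ℚ) = 4 * (d:ℚ) * q ^ 2 := by
        rw [hDq_def]
        push_cast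
        linear_combination -hXq
      have hDq0 : 0 < Dq := by
        have h : (0:ℚ) < (Dq:ℚ) := by
          rw [hDqQ]
          have hq2 : (0:ℚ) < q ^ 2 := by positivity
          nlinarith
        exact_mod_cast h
      have hX1b : -1 ≤ X1 ∧ X1 ≤ 1 := by
        constructor <;> nlinarith [hDq0]
      have hD34 : Dq = 3 ∨ Dq = 4 := by
        obtain ⟨hb1, hb2⟩ := hX1b
        have hsq : Dq = 4 - X1 ^ 2 := hDq_def
        interval_cases X1 <;> norm_num at hsq <;> omega
      rcases hD34 with h | h
      · exfalso
        have h3q : 4 * (d:ℚ) * q ^ 2 = 3 := by rw [← hDqQ, h]; norm_num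
        apply aux_rat d 1 hd3 (by norm_num) (2 * q)
        push_cast
        linear_combination h3q
      · -- Dq = 4 : u² = -1
        have hX10 : X1 = 0 := by nlinarith [h, hDq_def]
        have hp0 : p = 0 := by
          have h0 : ((X1:ℤ):ℚ) = 2 * p := hX1
          rw [hX10] at h0
          norm_num at h0
          linarith
        have hdq2 : (d:ℚ) * q ^ 2 = 1 := by
          have h4 : (Dq:ℚ) = 4 := by rw [h]; norm_num
          rw [hDqQ] at h4
          linarith
        have husq : (u : 𝓞 K) ^ 2 = -1 := by
          apply NumberField.RingOfIntegers.eq_iff.mp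
          push_cast [hU, hp0]
          have hdq2K : ((d:ℤ):K) * ((q:ℚ):K) ^ 2 = 1 := by exact_mod_cast hdq2
          linear_combination (q:K) ^ 2 * hz0 - hdq2K
        have hu2 : u ^ 2 = -1 := by
          apply Units.ext
          rw [Units.val_pow_eq_pow_val, husq]
          simp
        have hu8 : u ^ 8 = 1 := by
          rw [show (8:ℕ) = 2 * 4 from rfl, pow_mul, hu2,
            show (4:ℕ) = 2 * 2 from rfl, pow_mul, neg_one_sq, one_pow]
        rw [show (9:ℕ) = 8 + 1 from rfl, pow_succ, hu8, one_mul]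
  -- the cube
  have h9 : (u ^ 3) ^ 3 = u := by
    rw [← pow_mul, show (3 * 3 : ℕ) = 9 from rfl]
    exact hu9
  have hu33 : ((u ^ 3 : (𝓞 K)ˣ) : 𝓞 K) ^ 3 = (u : 𝓞 K) := by
    rw [← Units.val_pow_eq_pow_val, h9]
  set δ : 𝓞 K := γ * ((u ^ 3 : (𝓞 K)ˣ) : 𝓞 K) with hδ_def
  have hδ3 : δ ^ 3 = A := by
    rw [hδ_def, mul_pow, hu33, hu]
  -- final contradiction
  obtain ⟨s, r, hδc⟩ := hspan ((δ : 𝓞 K) : K)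
  have hδK : ((s:K) + (r:K) * z) ^ 3 = 1 + 18 * z := by
    rw [← hδc, ← hAK, ← map_pow, hδ3]
  obtain ⟨he1, he2⟩ := hbasis (s ^ 3 - 3 * (d:ℚ) * s * r ^ 2 - 1)
      (3 * s ^ 2 * r - (d:ℚ) * r ^ 3 - 18)
      (by push_cast
          linear_combination hδK - (3 * (s:K) * (r:K) ^ 2 + (r:K) ^ 3 * z) * hz0)
  by_cases hr : r = 0
  · rw [hr] at he2; norm_num at he2
  · obtain ⟨X, N, hX, hN⟩ := hint δ s r hδc
    set D : ℤ := 4 * N - X ^ 2 with hD_def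
    have hDQ : (D : ℚ) = 4 * (d:ℚ) * r ^ 2 := by
      rw [hD_def]
      push_cast
      rw [hN, hX]; ring
    have hD0 : 0 < D := by
      have h : (0:ℚ) < (D:ℚ) := by
        rw [hDQ]
        have hd0 : (1:ℚ) ≤ (d:ℚ) := by exact_mod_cast hd1
        have hr2 : (0:ℚ) < r ^ 2 := by positivity
        nlinarith
      exact_mod_cast h
    have hE : X * X * X - 3 * X * D = 8 := by
      have h : ((X * X * X - 3 * X * D : ℤ) : ℚ) = 8 := by
        push_cast
        rw [hX, hDQ]
        linear_combination (8:ℚ) * he1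
      exact_mod_cast h
    have hXdvd : X ∣ 8 := ⟨X * X - 3 * D, by linarith⟩
    have hXle : X ≤ 8 := Int.le_of_dvd (by norm_num) hXdvd
    have hXge : -8 ≤ X := by
      have h : -X ≤ 8 := Int.le_of_dvd (by norm_num) ((neg_dvd).mpr hXdvd)
      linarith
    have hD321 : D = 3 ∨ D = 6 ∨ D = 21 := by
      interval_cases X <;> omega
    have hcontra : ∀ c : ℤ, ¬ (3:ℤ) ∣ c → (D:ℚ) = 3 * c → False := by
      intro c hc hDc
      apply aux_rat d c hd3 hc (2 * r)
      rw [← hDc, hDQ]; push_cast; ring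
    rcases hD321 with h | h | h
    · exact hcontra 1 (by norm_num) (by rw [h]; norm_num)
    · exact hcontra 2 (by norm_num) (by rw [h]; norm_num)
    · exact hcontra 7 (by norm_num) (by rw [h]; norm_num)
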